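/- arXiv:1506.07435 — 6 statements merged into one kernel-verified Lean document; each statement's English description precedes it below -/
import Mathlib

section
/- There does not exist a continuous family h : ℝ → Matrix (Fin 2) (Fin 2) ℂ of self-adjoint matrices which is ℤ-periodic, satisfies the CS symmetry (entrywise complex conjugate of h(k) equals h(-k)), and such that exp(i h(k)) equals the rotation matrix β(k) = [[cos(2πk), sin(2πk)], [−sin(2πk), cos(2πk)]] for all k ∈ ℝ. -/
open Matrix Real Topology

private lemma stmt7_key (k : ℝ) (H : Matrix (Fin 2) (Fin 2) ℂ)
    (hexp : NormedSpace.exp (Complex.I • H) =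
      !![(Real.cos (2 * π * k) : ℂ), (Real.sin (2 * π * k) : ℂ);
         (-(Real.sin (2 * π * k)) : ℂ), (Real.cos (2 * π * k) : ℂ)])
    (hs : Real.sin (2 * π * k) ≠ 0) :
    ∃ n : ℤ, H 0 0 + Complex.I * H 0 1 - ((2 * π * k : ℝ) : ℂ) = ((2 * π * n : ℝ) : ℂ) := by
  set θ : ℝ := 2 * π * k with hθ
  set B : Matrix (Fin 2) (Fin 2) ℂ :=
    !![(Real.cos θ : ℂ), (Real.sin θ : ℂ); (-(Real.sin θ) : ℂ), (Real.cos θ : ℂ)] with hB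
  have hC : Commute (Complex.I • H) B := by
    rw [← hexp]; exact (Commute.refl _).exp_right
  have hHB : H * B = B * H := by
    have := hC.eq
    rw [smul_mul_assoc, mul_smul_comm] at this
    exact smul_right_injective _ Complex.I_ne_zero this
  have hssin : Complex.sin ↑θ ≠ 0 := by
    rw [← Complex.ofReal_sin]; exact_mod_cast hs
  have e1 : (H * B) 0 0 = (B * H) 0 0 := by rw [hHB]
  have e2 : (H * B) 0 1 = (B * H) 0 1 := by rw [hHB]
  simp [Matrix.mul_apply, Fin.sum_univ_succ, hB] at e1 e2
  have h10 : H 1 0 = -(H 0 1) := by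
    apply mul_left_cancel₀ hssin; linear_combination -e1
  have h11 : H 1 1 = H 0 0 := by
    apply mul_left_cancel₀ hssin; linear_combination -e2
  set a : ℂ := H 0 0
  set b : ℂ := H 0 1
  set P : Matrix (Fin 2) (Fin 2) ℂ := !![1, 1; Complex.I, -Complex.I] with hP
  set Q : Matrix (Fin 2) (Fin 2) ℂ := !![1/2, -Complex.I/2; 1/2, Complex.I/2] with hQ
  have hPQ : P * Q = 1 := by
    ext i j
    fin_cases i <;> fin_cases j <;>
      simp [hP, hQ, Matrix.mul_apply, Fin.sum_univ_succ, Matrix.one_apply] <;> ring_nf <;>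
      simp [Complex.ext_iff] <;> norm_num
  have hPinv : P⁻¹ = Q := Matrix.inv_eq_right_inv hPQ
  have hPunit : IsUnit P := by
    rw [Matrix.isUnit_iff_isUnit_det]
    simp [hP, Matrix.det_fin_two_of, Complex.ext_iff]
    norm_num
  have hI3 : Complex.I ^ 3 = -Complex.I := by
    rw [pow_succ, Complex.I_sq]; ring
  have hdfin : ∀ x y : ℂ, Matrix.diagonal ![x,y] = !![x,0;0,y] := by
    intro x y; ext i j; fin_cases i <;> fin_cases j <;> simp [Matrix.diagonal_apply]
  have hexpvec : ∀ x y : ℂ, NormedSpace.exp (![x,y] : Fin 2 → ℂ) = ![Complex.exp x, Complex.exp y] := by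
    intro x y; funext i; fin_cases i <;> simp [← Complex.exp_eq_exp_ℂ]
  set D : Matrix (Fin 2) (Fin 2) ℂ :=
    Matrix.diagonal ![Complex.I * (a + Complex.I * b), Complex.I * (a - Complex.I * b)] with hD
  have hdiag : Complex.I • H = P * D * P⁻¹ := by
    rw [hPinv, hD, hdfin]
    ext i j
    fin_cases i <;> fin_cases j <;>
      simp [hP, hQ, Matrix.mul_apply, Fin.sum_univ_succ, h10, h11] <;>
      ring_nf <;> try simp [hI3] <;> try ring_nf
    all_goals rfl
  have hBeq : B = P * Matrix.diagonal
      ![Complex.exp (Complex.I * (a + Complex.I * b)),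
        Complex.exp (Complex.I * (a - Complex.I * b))] * P⁻¹ := by
    rw [← hexp, hdiag, Matrix.exp_conj P D hPunit, hD, Matrix.exp_diagonal, hexpvec]
  rw [hPinv, hdfin] at hBeq
  have e00 : B 0 0 = (P * !![Complex.exp (Complex.I * (a + Complex.I * b)), 0; 0,
        Complex.exp (Complex.I * (a - Complex.I * b))] * Q) 0 0 := by rw [← hBeq]
  have e01 : B 0 1 = (P * !![Complex.exp (Complex.I * (a + Complex.I * b)), 0; 0,
        Complex.exp (Complex.I * (a - Complex.I * b))] * Q) 0 1 := by rw [← hBeq]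
  simp [hP, hQ, hB, Matrix.mul_apply, Fin.sum_univ_succ] at e00 e01
  have hx : Complex.exp (Complex.I * (a + Complex.I * b)) = Complex.exp (↑θ * Complex.I) := by
    rw [Complex.exp_mul_I]
    linear_combination -e00 - Complex.I * e01 -
      ((Complex.exp (Complex.I * (a - Complex.I * b)) -
        Complex.exp (Complex.I * (a + Complex.I * b))) / 2) * Complex.I_sq
  obtain ⟨n, hn⟩ := Complex.exp_eq_exp_iff_exists_int.mp hx
  refine ⟨n, ?_⟩
  have := mul_left_cancel₀ Complex.I_ne_zero
    (show Complex.I * (a + Complex.I * b) = Complex.I * (↑θ + n * (2 * π)) by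
      linear_combination hn)
  push_cast
  linear_combination this


theorem stmt_7 :
    ¬ ∃ h : ℝ → Matrix (Fin 2) (Fin 2) ℂ,
      Continuous h ∧
      (∀ k, (h k).IsHermitian) ∧
      (∀ k, h (k + 1) = h k) ∧
      (∀ k, (h k).map (starRingEnd ℂ) = h (-k)) ∧
      (∀ k : ℝ, NormedSpace.exp (Complex.I • h k) =
        !![(Real.cos (2 * π * k) : ℂ), (Real.sin (2 * π * k) : ℂ);
           (-(Real.sin (2 * π * k)) : ℂ), (Real.cos (2 * π * k) : ℂ)]) := by
  rintro ⟨h, hcont, -, hper, -, hexp⟩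
  set g : ℝ → ℂ := fun k => h k 0 0 + Complex.I * h k 0 1 - ((2 * π * k : ℝ) : ℂ) with hg
  have hgcont : Continuous g := by
    apply Continuous.sub
    · exact ((hcont.matrix_elem 0 0).add (continuous_const.mul (hcont.matrix_elem 0 1)))
    · exact Complex.continuous_ofReal.comp (continuous_const.mul continuous_id)
  set e : ℤ → ℂ := fun n => ((2 * π * n : ℝ) : ℂ) with he
  have hece : IsClosedEmbedding e := by
    have h1 : IsClosedEmbedding ((↑) : ℤ → ℝ) := Int.isClosedEmbedding_coe_real
    have h2 : IsClosedEmbedding (fun x : ℝ => 2 * π * x) :=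
      (Homeomorph.mulLeft₀ (2 * π) (by positivity)).isClosedEmbedding
    have h3 : IsClosedEmbedding ((↑) : ℝ → ℂ) := Complex.isometry_ofReal.isClosedEmbedding
    exact (h3.comp h2).comp h1
  set T : Set ℝ := g ⁻¹' (Set.range e) with hT
  have hTclosed : IsClosed T := hece.isClosed_range.preimage hgcont
  have hTdense : Dense T := by
    have hsub : {k : ℝ | Real.sin (2 * π * k) = 0}ᶜ ⊆ T := by
      intro k hk
      obtain ⟨n, hn⟩ := stmt7_key k (h k) (hexp k) hk
      exact ⟨n, hn.symm⟩
    have hcount : ({k : ℝ | Real.sin (2 * π * k) = 0}).Countable := by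
      apply Set.Countable.mono ?_ (Set.countable_range (fun n : ℤ => (n : ℝ) / 2))
      intro k hk
      obtain ⟨n, hn⟩ := Real.sin_eq_zero_iff.mp hk
      refine ⟨n, ?_⟩
      have h2 : (n : ℝ) = 2 * k := by
        apply mul_right_cancel₀ Real.pi_ne_zero
        linear_combination hn
      linarith
    exact Dense.mono hsub (hcount.dense_compl ℝ)
  have hTuniv : ∀ k : ℝ, g k ∈ Set.range e := by
    intro k
    have : T = Set.univ := hTclosed.closure_eq ▸ hTdense.closure_eq
    have := this ▸ Set.mem_univ k
    exact this
  set N : ℝ → ℤ := fun k => ⌊(g k).re / (2 * π)⌋ with hN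
  have h2π : (0:ℝ) < 2 * π := by positivity
  have hNe : ∀ k, g k = e (N k) := by
    intro k
    obtain ⟨n, hn⟩ := hTuniv k
    have hre : (g k).re = 2 * π * n := by rw [← hn]; simp [he]
    have : (g k).re / (2 * π) = (n : ℝ) := by
      rw [hre]; field_simp
    have hNk : N k = n := by rw [hN]; simp only [this, Int.floor_intCast]
    rw [hNk, ← hn]
  have hNcont : Continuous N := by
    rw [IsEmbedding.continuous_iff Int.isClosedEmbedding_coe_real.isEmbedding]
    have : ((↑) : ℤ → ℝ) ∘ N = fun k => (g k).re / (2 * π) := by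
      funext k
      obtain ⟨n, hn⟩ := hTuniv k
      have hre : (g k).re = 2 * π * n := by rw [← hn]; simp [he]
      have h1 : (g k).re / (2 * π) = (n : ℝ) := by rw [hre]; field_simp
      have h2 : N k = n := by rw [hN]; simp only [h1, Int.floor_intCast]
      simp [h2, h1]
    rw [this]
    exact (Complex.continuous_re.comp hgcont).div_const _
  have hLC : IsLocallyConstant N := (IsLocallyConstant.iff_continuous N).mpr hNcont
  have hN01 : N 1 = N 0 := hLC.apply_eq_of_preconnectedSpace 1 0
  have hg1 : g 1 = g 0 - 2 * π := by
    rw [hg]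
    simp only
    have := hper 0
    rw [zero_add] at this
    rw [this]
    push_cast
    ring
  have h5 : e (N 1) = e (N 0) - 2 * π := by
    rw [← hNe 1, hg1, hNe 0]
  rw [hN01] at h5
  have hpi : ((π : ℝ) : ℂ) = 0 := by
    have h0 : (2 * (π:ℂ)) = 0 := by linear_combination h5
    have := mul_eq_zero.mp h0
    rcases this with h | h
    · norm_num at h
    · exact h
  rw [Complex.ofReal_eq_zero] at hpi
  exact Real.pi_ne_zero hpi
end

section
/- Let P, Q be orthogonal projections on a Hilbert space with ‖P − Q‖ < 1. Then the Sz.-Nagy operator U := (QP + (Id − Q)(Id − P)) · (Id − (P − Q)²)^{-1/2} is unitary and intertwines the projections: Q·U = U·P. -/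
open scoped NNReal ContinuousFunctionalCalculus

section helpers
variable {H : Type*} [NormedAddCommGroup H] [InnerProductSpace ℂ H] [CompleteSpace H]

lemma commute_cfc_complex' (a b : H →L[ℂ] H) (ha : IsStarNormal a) (h1 : Commute b a)
    (h2 : Commute b (star a)) (f : ℂ → ℂ) : Commute b (cfc f a) := by
  by_cases hf : ContinuousOn f (spectrum ℂ a)
  · rw [cfc_apply f a ha hf]
    have key : ∀ g : C(spectrum ℂ a, ℂ), Commute b (cfcHom ha g) := by
      intro g
      induction g using ContinuousMap.induction_on_of_compact with
      | const r =>
        have : (ContinuousMap.const (spectrum ℂ a) r) = algebraMap ℂ C(spectrum ℂ a, ℂ) r := rfl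
        rw [this, AlgHomClass.commutes]
        exact (Algebra.commutes r b).symm
      | id => rw [cfcHom_id ha]; exact h1
      | star_id => rw [map_star, cfcHom_id ha]; exact h2
      | add f g hf hg => rw [map_add]; exact hf.add_right hg
      | mul f g hf hg => rw [map_mul]; exact hf.mul_right hg
      | frequently g hg =>
        have hcl : IsClosed {g : C(spectrum ℂ a, ℂ) | Commute b (cfcHom ha g)} := by
          apply isClosed_eq
          · exact continuous_mul_left b |>.comp (cfcHom_continuous ha)
          · exact continuous_mul_right b |>.comp (cfcHom_continuous ha)
        exact hcl.closure_subset (mem_closure_iff_frequently.mpr hg)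
    exact key _
  · rw [cfc_apply_of_not_continuousOn a hf]; exact Commute.zero_right b

lemma commute_cfc_nnreal' (a b : H →L[ℂ] H) (ha : 0 ≤ a) (h1 : Commute b a)
    (f : ℝ≥0 → ℝ≥0) : Commute b (cfc f a) := by
  have hsa : IsSelfAdjoint a := .of_nonneg ha
  rw [cfc_nnreal_eq_real f a ha, cfc_real_eq_complex _ hsa]
  refine commute_cfc_complex' a b hsa.isStarNormal h1 ?_ _
  rw [hsa.star_eq]; exact h1

lemma commute_rpow' (a b : H →L[ℂ] H) (ha : 0 ≤ a) (h1 : Commute b a) (y : ℝ) :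
    Commute b (CFC.rpow a y) :=
  commute_cfc_nnreal' a b ha h1 _
end helpers

theorem stmt_8 {H : Type*} [NormedAddCommGroup H] [InnerProductSpace ℂ H] [CompleteSpace H]
    (P Q : H →L[ℂ] H)
    (hP : IsSelfAdjoint P) (hP2 : P * P = P)
    (hQ : IsSelfAdjoint Q) (hQ2 : Q * Q = Q)
    (hnorm : ‖P - Q‖ < 1) :
    (Q * P + (1 - Q) * (1 - P)) * CFC.rpow (1 - (P - Q) ^ 2) (-(1/2) : ℝ) ∈
      unitary (H →L[ℂ] H) ∧
    Q * ((Q * P + (1 - Q) * (1 - P)) * CFC.rpow (1 - (P - Q) ^ 2) (-(1/2) : ℝ)) =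
      ((Q * P + (1 - Q) * (1 - P)) * CFC.rpow (1 - (P - Q) ^ 2) (-(1/2) : ℝ)) * P := by
  set V := Q * P + (1 - Q) * (1 - P) with hV
  set D := 1 - (P - Q) ^ 2 with hD
  set T := CFC.rpow D (-(1/2) : ℝ) with hT
  have hP2' : ∀ X : H →L[ℂ] H, P * (P * X) = P * X := fun X => by rw [← mul_assoc, hP2]
  have hQ2' : ∀ X : H →L[ℂ] H, Q * (Q * X) = Q * X := fun X => by rw [← mul_assoc, hQ2]
  have hsV : star V = P * Q + (1 - P) * (1 - Q) := by
    simp [hV, star_sub, star_mul, hP.star_eq, hQ.star_eq]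
  have hVsV : star V * V = D := by
    rw [hsV, hV, hD]
    simp only [mul_add, add_mul, mul_sub, sub_mul, mul_one, one_mul, sq, mul_assoc, hP2, hQ2,
      hP2', hQ2']
    noncomm_ring
  have hVVs : V * star V = D := by
    rw [hsV, hV, hD]
    simp only [mul_add, add_mul, mul_sub, sub_mul, mul_one, one_mul, sq, mul_assoc, hP2, hQ2,
      hP2', hQ2']
    noncomm_ring
  have hPD : Commute P D := by
    unfold D
    simp only [Commute, SemiconjBy, mul_sub, sub_mul, mul_one, one_mul, sq, mul_add, add_mul,
      mul_assoc, hP2, hQ2, hP2', hQ2']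
    noncomm_ring
  have hQV : Q * V = Q * P := by
    rw [hV]
    simp only [mul_add, mul_sub, sub_mul, mul_one, one_mul, mul_assoc, hP2, hQ2, hP2', hQ2']
    noncomm_ring
  have hVP : V * P = Q * P := by
    rw [hV]
    simp only [add_mul, mul_sub, sub_mul, mul_one, one_mul, mul_assoc, hP2, hQ2, hP2', hQ2']
    noncomm_ring
  -- positivity and invertibility of D
  have hDpos : 0 ≤ D := hVsV ▸ star_mul_self_nonneg V
  have hDunit : IsUnit D := by
    have h2 : ‖(P - Q) ^ 2‖ < 1 := by
      have := norm_nonneg (P - Q)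
      calc ‖(P - Q) ^ 2‖ ≤ ‖P - Q‖ ^ 2 := norm_pow_le' _ (by norm_num)
        _ < 1 := by nlinarith
    exact (Units.oneSub _ h2).isUnit
  have hspec : (0 : ℝ≥0) ∉ spectrum ℝ≥0 D := spectrum.zero_notMem ℝ≥0 hDunit
  -- rpow facts
  have hTnn : 0 ≤ T := CFC.rpow_nonneg
  have hTsa : IsSelfAdjoint T := .of_nonneg hTnn
  have hTT : T * T = CFC.rpow D (-1 : ℝ) := by
    rw [hT]
    calc CFC.rpow D (-(1/2) : ℝ) * CFC.rpow D (-(1/2) : ℝ)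
        = CFC.rpow D ((-(1/2)) + (-(1/2)) : ℝ) := (CFC.rpow_add hDunit).symm
      _ = CFC.rpow D (-1 : ℝ) := by norm_num
  have hDinvD : CFC.rpow D (-1 : ℝ) * D = 1 := by
    calc CFC.rpow D (-1 : ℝ) * D = CFC.rpow D (-1 : ℝ) * CFC.rpow D (1 : ℝ) := by
          rw [show CFC.rpow D (1:ℝ) = D from CFC.rpow_one D hDpos]
      _ = CFC.rpow D ((-1) + 1 : ℝ) := (CFC.rpow_add hDunit).symm
      _ = 1 := by norm_num; exact CFC.rpow_zero D hDpos
  have hDDinv : D * CFC.rpow D (-1 : ℝ) = 1 := by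
    calc D * CFC.rpow D (-1 : ℝ) = CFC.rpow D (1 : ℝ) * CFC.rpow D (-1 : ℝ) := by
          rw [show CFC.rpow D (1:ℝ) = D from CFC.rpow_one D hDpos]
      _ = CFC.rpow D (1 + (-1) : ℝ) := (CFC.rpow_add hDunit).symm
      _ = 1 := by norm_num; exact CFC.rpow_zero D hDpos
  -- commutation
  have hVD : Commute V D := by
    calc V * D = V * (star V * V) := by rw [hVsV]
      _ = (V * star V) * V := by rw [mul_assoc]
      _ = D * V := by rw [hVVs]
  have hPT : Commute P T := commute_rpow' D P hDpos hPD _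
  have hDT : Commute D T := commute_rpow' D D hDpos (Commute.refl D) _
  have hVDinv : Commute V (CFC.rpow D (-1 : ℝ)) := commute_rpow' D V hDpos hVD _
  constructor
  · rw [Unitary.mem_iff]
    constructor
    · calc star (V * T) * (V * T) = T * (star V * V) * T := by
            rw [star_mul, hTsa.star_eq, mul_assoc, mul_assoc, mul_assoc]
        _ = T * D * T := by rw [hVsV]
        _ = D * (T * T) := by rw [← hDT.eq, mul_assoc]
        _ = D * CFC.rpow D (-1 : ℝ) := by rw [hTT]
        _ = 1 := hDDinv
    · calc (V * T) * star (V * T) = V * (T * T) * star V := by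
            rw [star_mul, hTsa.star_eq, mul_assoc, mul_assoc, mul_assoc]
        _ = V * CFC.rpow D (-1 : ℝ) * star V := by rw [hTT]
        _ = CFC.rpow D (-1 : ℝ) * (V * star V) := by rw [hVDinv.eq, mul_assoc]
        _ = CFC.rpow D (-1 : ℝ) * D := by rw [hVVs]
        _ = 1 := hDinvD
  · calc Q * (V * T) = (Q * V) * T := by rw [mul_assoc]
      _ = (Q * P) * T := by rw [hQV]
      _ = (V * P) * T := by rw [hVP]
      _ = V * (T * P) := by rw [mul_assoc, hPT.eq]
      _ = (V * T) * P := by rw [mul_assoc]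
end

section
/- Let τ be a unitary operator on a complex Hilbert space and K an anti-unitary involution with Kτ = τ⁻¹K. Let M be the self-adjoint operator with spectrum in (−π, π] such that τ = exp(iM), obtained via the spectral theorem. Then KMK = M, and the family u_k := exp(ikM), k ∈ ℝ, satisfies: u₀ = Id, u_k u_{k'} = u_{k+k'}, u_k* = u_{-k}, u₁ = τ, and K u_k = u_{-k} K for all k. -/
set_option linter.unusedSectionVars false
set_option maxHeartbeats 1000000

open Real


lemma expI_eq (θ : ℝ) :
    Complex.exp (Complex.I * (θ : ℂ)) = (Real.cos θ : ℂ) + (Real.sin θ : ℂ) * Complex.I := by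
  rw [mul_comm, Complex.exp_mul_I, Complex.ofReal_cos, Complex.ofReal_sin]

lemma key_log {H : Type*} [NormedAddCommGroup H] [InnerProductSpace ℂ H] [CompleteSpace H]
    (u A : H →L[ℂ] H) (hA : IsSelfAdjoint A)
    (hspecA : ∀ z ∈ spectrum ℂ A, z.im = 0 ∧ z.re ∈ Set.Ioc (-π) π)
    (hexpA : NormedSpace.exp (Complex.I • A) = u) :
    A = cfc (fun z : ℂ => (Complex.arg z : ℂ)) u := by
  have hAn : IsStarNormal A := hA.isStarNormal
  have hIA : IsStarNormal (Complex.I • A) := by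
    constructor
    rw [star_smul, hA.star_eq]
    exact ((Commute.refl A).smul_left _).smul_right _
  have hg : ContinuousOn (fun z : ℂ => Complex.exp (Complex.I * z)) (spectrum ℂ A) :=
    (Complex.continuous_exp.comp (continuous_const.mul continuous_id)).continuousOn
  have hu : u = cfc (fun z : ℂ => Complex.exp (Complex.I * z)) A := by
    rw [← hexpA, ← CFC.complex_exp_eq_normedSpace_exp (a := Complex.I • A),
      ← cfc_const_mul_id Complex.I A, ← cfc_comp' Complex.exp (fun z : ℂ => Complex.I * z) A]
  have hform : ∀ z ∈ spectrum ℂ A, z = ((z.re : ℝ) : ℂ) ∧ z.re ∈ Set.Ioc (-π) π := by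
    intro z hz
    exact ⟨Complex.ext rfl (hspecA z hz).1, (hspecA z hz).2⟩
  obtain ⟨δ, hδpos, hδle, hδ⟩ : ∃ δ, 0 < δ ∧ δ ≤ π / 2 ∧ ∀ z ∈ spectrum ℂ A, -π + δ ≤ z.re := by
    rcases (spectrum ℂ A).eq_empty_or_nonempty with h | h
    · exact ⟨π / 2, by positivity, le_refl _, by simp [h]⟩
    · obtain ⟨z₀, hz₀, hmin⟩ := (spectrum.isCompact A).exists_isMinOn h
        (Complex.continuous_re.continuousOn)
      have h1 : -π < z₀.re := (hspecA z₀ hz₀).2.1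
      have hpi := pi_pos
      refine ⟨min (z₀.re + π) (π / 2), lt_min (by linarith) (by positivity),
        min_le_right _ _, fun z hz => ?_⟩
      have h2 : z₀.re ≤ z.re := hmin hz
      have h3 : min (z₀.re + π) (π / 2) ≤ z₀.re + π := min_le_left _ _
      linarith
  have hσu : spectrum ℂ u = (fun z : ℂ => Complex.exp (Complex.I * z)) '' spectrum ℂ A := by
    rw [hu]; exact cfc_map_spectrum _ A
  have hudesc : ∀ w ∈ spectrum ℂ u, ∃ θ : ℝ, θ ∈ Set.Ioc (-π) π ∧ -π + δ ≤ θ ∧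
      w.re = Real.cos θ ∧ w.im = Real.sin θ := by
    intro w hw
    rw [hσu] at hw
    obtain ⟨z, hz, rfl⟩ := hw
    obtain ⟨hzeq, hzr⟩ := hform z hz
    have hwz : Complex.exp (Complex.I * z) = (Real.cos z.re : ℂ) + (Real.sin z.re : ℂ) * Complex.I := by
      conv_lhs => rw [hzeq]
      exact expI_eq z.re
    refine ⟨z.re, hzr, hδ z hz, ?_, ?_⟩ <;>
      simp only [hwz, Complex.add_re, Complex.add_im, Complex.mul_re, Complex.mul_im,
        Complex.I_re, Complex.I_im, Complex.ofReal_re, Complex.ofReal_im] <;> ring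
  -- continuity of arg on spectrum of u
  have hf : ContinuousOn (fun z : ℂ => (Complex.arg z : ℂ)) (spectrum ℂ u) := by
    apply Complex.continuous_ofReal.comp_continuousOn
    intro w hw
    obtain ⟨θ, hθ, hθδ, hre, him⟩ := hudesc w hw
    by_cases hsp : w ∈ Complex.slitPlane
    · exact (Complex.continuousAt_arg hsp).continuousWithinAt
    · rw [Complex.mem_slitPlane_iff] at hsp
      push_neg at hsp
      obtain ⟨h1, h2⟩ := hsp
      have hsin : Real.sin θ = 0 := by rw [← him, h2]
      have hθpi : θ = π := by
        by_contra hne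
        have hθlt : θ < π := lt_of_le_of_ne hθ.2 hne
        have := (Real.sin_eq_zero_iff_of_lt_of_lt hθ.1 hθlt).mp hsin
        rw [this] at hre
        simp [Real.cos_zero] at hre
        rw [hre] at h1
        linarith
      have hwre : w.re < 0 := by rw [hre, hθpi, Real.cos_pi]; norm_num
      apply ContinuousWithinAt.mono_of_mem_nhdsWithin
        (Complex.continuousWithinAt_arg_of_re_neg_of_im_zero hwre h2)
      -- {z | 0 ≤ z.im} ∈ 𝓝[spectrum ℂ u] w
      rw [Metric.mem_nhdsWithin_iff]
      refine ⟨Real.sqrt (2 - 2 * Real.cos δ), Real.sqrt_pos.mpr ?_, ?_⟩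
      · have hc1 : Real.cos δ < Real.cos 0 := by
          apply Real.strictAntiOn_cos ⟨le_refl 0, Real.pi_pos.le⟩
            ⟨hδpos.le, by linarith [Real.pi_pos]⟩ hδpos
        rw [Real.cos_zero] at hc1
        linarith
      · rintro w' ⟨hball, hw'⟩
        obtain ⟨θ', hθ', hθδ', hre', him'⟩ := hudesc w' hw'
        show 0 ≤ w'.im
        rw [him']
        by_contra hneg
        push_neg at hneg
        have hθ'neg : θ' < 0 := by
          by_contra hpos
          push_neg at hpos
          exact absurd (Real.sin_nonneg_of_nonneg_of_le_pi hpos hθ'.2) (not_le.mpr hneg)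
        -- dist w' w ≥ sqrt (2 - 2 cos δ)
        have hcos : -Real.cos δ ≤ Real.cos θ' := by
          rw [← Real.cos_pi_sub, ← Real.cos_neg θ']
          apply Real.cos_le_cos_of_nonneg_of_le_pi (by linarith) (by linarith [pi_pos])
          linarith
        have hwval : w = -1 := by
          have : w.re = -1 := by rw [hre, hθpi, Real.cos_pi]
          have h2' := h2
          apply Complex.ext <;> simp [this, h2']
        have hnorm : ‖w' - w‖ ^ 2 = 2 + 2 * Real.cos θ' := by
          rw [hwval, Complex.sq_norm]
          simp only [Complex.normSq_apply, Complex.sub_re, Complex.sub_im, Complex.neg_re,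
            Complex.neg_im, Complex.one_re, Complex.one_im, hre', him']
          nlinarith [Real.sin_sq_add_cos_sq θ']
        have hdist : Real.sqrt (2 - 2 * Real.cos δ) ≤ ‖w' - w‖ := by
          have h1' : (2 - 2 * Real.cos δ : ℝ) ≤ ‖w' - w‖ ^ 2 := by rw [hnorm]; linarith
          calc Real.sqrt (2 - 2 * Real.cos δ) ≤ Real.sqrt (‖w' - w‖ ^ 2) :=
                Real.sqrt_le_sqrt h1'
            _ = ‖w' - w‖ := Real.sqrt_sq (norm_nonneg _)
        rw [mem_ball_iff_norm] at hball
        linarith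
  -- final composition
  have hcomp : cfc (fun z : ℂ => (Complex.arg z : ℂ)) u =
      cfc (fun z : ℂ => ((Complex.arg (Complex.exp (Complex.I * z)) : ℝ) : ℂ)) A := by
    rw [hu, ← cfc_comp' (fun z : ℂ => (Complex.arg z : ℂ)) (fun z : ℂ => Complex.exp (Complex.I * z)) A (by rw [← hσu]; exact hf) hg]
  rw [hcomp]
  conv_lhs => rw [← cfc_id ℂ A hAn]
  apply cfc_congr
  intro z hz
  obtain ⟨hzeq, hzr⟩ := hform z hz
  have hwz : Complex.exp (Complex.I * z) = Complex.cos (z.re : ℂ) + Complex.sin (z.re : ℂ) * Complex.I := by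
    conv_lhs => rw [hzeq]
    rw [expI_eq, Complex.ofReal_cos, Complex.ofReal_sin]
  simp only [hwz, id_eq]
  rw [Complex.arg_cos_add_sin_mul_I hzr]
  exact hzeq

open Real

section Kpart
variable {H : Type*} [NormedAddCommGroup H] [InnerProductSpace ℂ H] [CompleteSpace H]
variable (K : H → H)

lemma K_neg (hsmul : ∀ (c : ℂ) (x : H), K (c • x) = (starRingEnd ℂ c) • K x) (x : H) :
    K (-x) = -K x := by
  have := hsmul (-1) x
  simpa using this

lemma K_sub (hadd : ∀ x y, K (x + y) = K x + K y)
    (hsmul : ∀ (c : ℂ) (x : H), K (c • x) = (starRingEnd ℂ c) • K x) (x y : H) :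
    K (x - y) = K x - K y := by
  rw [sub_eq_add_neg, hadd, K_neg K hsmul, ← sub_eq_add_neg]

lemma K_norm (hanti : ∀ x y, inner ℂ (K x) (K y) = (inner ℂ y x : ℂ)) (x : H) : ‖K x‖ = ‖x‖ := by
  have h : RCLike.re (inner ℂ (K x) (K x) : ℂ) = RCLike.re (inner ℂ x x : ℂ) := by rw [hanti x x]
  rw [@inner_self_eq_norm_sq ℂ, @inner_self_eq_norm_sq ℂ] at h
  have := congrArg Real.sqrt h
  simpa [Real.sqrt_sq, norm_nonneg] using this

lemma K_cont (hadd : ∀ x y, K (x + y) = K x + K y)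
    (hsmul : ∀ (c : ℂ) (x : H), K (c • x) = (starRingEnd ℂ c) • K x)
    (hnorm : ∀ x, ‖K x‖ = ‖x‖) : Continuous K := by
  have : Isometry K := by
    apply Isometry.of_dist_eq
    intro x y
    rw [dist_eq_norm, dist_eq_norm, ← hnorm (x - y), sub_eq_add_neg x y, hadd,
      K_neg K hsmul, ← sub_eq_add_neg]
  exact this.continuous

lemma kexp (hadd : ∀ x y, K (x + y) = K x + K y)
    (hsmul : ∀ (c : ℂ) (x : H), K (c • x) = (starRingEnd ℂ c) • K x)
    (hnorm : ∀ x, ‖K x‖ = ‖x‖)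
    (T S : H →L[ℂ] H) (hTS : ∀ x, K (T x) = S (K x)) (x : H) :
    K (NormedSpace.exp T x) = NormedSpace.exp S (K x) := by
  have hKc : Continuous K := K_cont K hadd hsmul hnorm
  have hpow : ∀ n : ℕ, ∀ y, K ((T ^ n) y) = (S ^ n) (K y) := by
    intro n
    induction n with
    | zero => intro y; simp
    | succ n ih =>
        intro y
        rw [pow_succ, pow_succ, ContinuousLinearMap.mul_apply, ContinuousLinearMap.mul_apply,
          ih, hTS]
  have happ : ∀ (R : H →L[ℂ] H) (y : H),
      NormedSpace.exp R y = ∑' n : ℕ, (((n.factorial : ℂ))⁻¹ • (R ^ n)) y := by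
    intro R y
    rw [NormedSpace.exp_eq_tsum (𝕂 := ℂ)]
    exact ((NormedSpace.expSeries_summable' (𝕂 := ℂ) R).hasSum.mapL
      (ContinuousLinearMap.apply ℂ H y)).tsum_eq.symm
  have hsumT : Summable fun n : ℕ => (((n.factorial : ℂ))⁻¹ • (T ^ n)) x := by
    exact ((NormedSpace.expSeries_summable' (𝕂 := ℂ) T).hasSum.mapL
      (ContinuousLinearMap.apply ℂ H x)).summable
  have hK : K (∑' n : ℕ, (((n.factorial : ℂ))⁻¹ • (T ^ n)) x)
      = ∑' n : ℕ, K ((((n.factorial : ℂ))⁻¹ • (T ^ n)) x) :=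
    (hsumT.hasSum.map (AddMonoidHom.mk' K hadd) hKc).tsum_eq.symm
  rw [happ, hK, happ]
  congr 1
  funext n
  rw [ContinuousLinearMap.smul_apply, hsmul, hpow, ContinuousLinearMap.smul_apply]
  congr 1
  simp
end Kpart


section conj
variable {H : Type*} [NormedAddCommGroup H] [InnerProductSpace ℂ H] [CompleteSpace H]

noncomputable def conjCLM (K : H → H) (hadd : ∀ x y, K (x + y) = K x + K y)
    (hsmul : ∀ (c : ℂ) (x : H), K (c • x) = (starRingEnd ℂ c) • K x)
    (hnorm : ∀ x, ‖K x‖ = ‖x‖) (T : H →L[ℂ] H) : H →L[ℂ] H :=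
  LinearMap.mkContinuous
    { toFun := fun x => K (T (K x))
      map_add' := fun x y => by
        show K (T (K (x + y))) = K (T (K x)) + K (T (K y))
        rw [hadd, map_add, hadd]
      map_smul' := fun c x => by
        show K (T (K (c • x))) = c • K (T (K x))
        rw [hsmul, map_smul, hsmul, Complex.conj_conj] }
    ‖T‖ (fun x => by
      simp only [LinearMap.coe_mk, AddHom.coe_mk]
      rw [hnorm]
      calc ‖T (K x)‖ ≤ ‖T‖ * ‖K x‖ := T.le_opNorm _
        _ = ‖T‖ * ‖x‖ := by rw [hnorm])

lemma conjCLM_apply (K : H → H) (hadd : ∀ x y, K (x + y) = K x + K y)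
    (hsmul : ∀ (c : ℂ) (x : H), K (c • x) = (starRingEnd ℂ c) • K x)
    (hnorm : ∀ x, ‖K x‖ = ‖x‖) (T : H →L[ℂ] H) (x : H) :
    conjCLM K hadd hsmul hnorm T x = K (T (K x)) := rfl

end conj

theorem stmt_14 {H : Type*} [NormedAddCommGroup H] [InnerProductSpace ℂ H] [CompleteSpace H]
    (τ : H →L[ℂ] H) (hτ : τ ∈ unitary (H →L[ℂ] H))
    (K : H → H)
    (hadd : ∀ x y, K (x + y) = K x + K y)
    (hsmul : ∀ (c : ℂ) (x : H), K (c • x) = (starRingEnd ℂ c) • K x)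
    (hinvol : ∀ x, K (K x) = x)
    (hanti : ∀ x y, inner ℂ (K x) (K y) = (inner ℂ y x : ℂ))
    (hKτ : ∀ x, K (τ x) = (star τ) (K x))
    (M : H →L[ℂ] H) (hM : IsSelfAdjoint M)
    (hspec : ∀ z ∈ spectrum ℂ M, z.im = 0 ∧ z.re ∈ Set.Ioc (-π) π)
    (hexp : NormedSpace.exp (Complex.I • M) = τ) :
    (∀ x, K (M x) = M (K x)) ∧
    NormedSpace.exp ((Complex.I * (0 : ℝ)) • M) = 1 ∧
    (∀ k k' : ℝ, NormedSpace.exp ((Complex.I * k) • M) *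
        NormedSpace.exp ((Complex.I * k') • M) =
        NormedSpace.exp ((Complex.I * (k + k' : ℝ)) • M)) ∧
    (∀ k : ℝ, star (NormedSpace.exp ((Complex.I * k) • M)) =
        NormedSpace.exp ((Complex.I * (-k : ℝ)) • M)) ∧
    NormedSpace.exp ((Complex.I * (1 : ℝ)) • M) = τ ∧
    (∀ (k : ℝ) (x : H), K (NormedSpace.exp ((Complex.I * k) • M) x) =
        NormedSpace.exp ((Complex.I * (-k : ℝ)) • M) (K x)) := by
  have hnorm : ∀ x, ‖K x‖ = ‖x‖ := K_norm K hanti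
  set N : H →L[ℂ] H := conjCLM K hadd hsmul hnorm M with hN
  have hNapp : ∀ y, N y = K (M (K y)) := fun _ => rfl
  have hNsa : IsSelfAdjoint N := by
    rw [ContinuousLinearMap.isSelfAdjoint_iff_isSymmetric]
    intro x y
    show (inner ℂ (K (M (K x))) y : ℂ) = inner ℂ x (K (M (K y)))
    calc (inner ℂ (K (M (K x))) y : ℂ)
        = inner ℂ (K (M (K x))) (K (K y)) := by rw [hinvol]
      _ = inner ℂ (K y) (M (K x)) := hanti _ _
      _ = inner ℂ (M (K y)) (K x) := (hM.isSymmetric (K y) (K x)).symm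
      _ = inner ℂ (K (K (M (K y)))) (K x) := by rw [hinvol]
      _ = inner ℂ x (K (M (K y))) := hanti _ _
  have hconjspec : ∀ z : ℂ, z ∈ spectrum ℂ N → (starRingEnd ℂ z) ∈ spectrum ℂ M := by
    intro z hz
    by_contra hc
    rw [spectrum.notMem_iff] at hc
    refine spectrum.notMem_iff.mpr ?_ hz
    obtain ⟨v, hv⟩ := hc
    set R := (↑v⁻¹ : H →L[ℂ] H) with hR
    have hv1 : (algebraMap ℂ (H →L[ℂ] H) (starRingEnd ℂ z) - M) * R = 1 := by
      rw [← hv]; exact v.mul_inv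
    have hv2 : R * (algebraMap ℂ (H →L[ℂ] H) (starRingEnd ℂ z) - M) = 1 := by
      rw [← hv]; exact v.inv_mul
    set B : H →L[ℂ] H := conjCLM K hadd hsmul hnorm R with hB
    have halg : ∀ (w : ℂ) (x : H), (algebraMap ℂ (H →L[ℂ] H) w) x = w • x := by
      intro w x
      rw [Algebra.algebraMap_eq_smul_one]
      simp
    refine ⟨⟨algebraMap ℂ (H →L[ℂ] H) z - N, B, ?_, ?_⟩, rfl⟩
    · ext x
      have h1 : (algebraMap ℂ (H →L[ℂ] H) (starRingEnd ℂ z) - M) (R (K x)) = K x := by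
        have := congrArg (fun (T : H →L[ℂ] H) => T (K x)) hv1
        simpa using this
      rw [ContinuousLinearMap.mul_apply]
      show (algebraMap ℂ (H →L[ℂ] H) z - N) (K (R (K x))) = x
      rw [ContinuousLinearMap.sub_apply, halg, hNapp, hinvol]
      have h2 : z • K (R (K x)) = K ((starRingEnd ℂ z) • R (K x)) := by
        rw [hsmul, Complex.conj_conj]
      rw [h2, ← K_sub K hadd hsmul]
      have h3 : (starRingEnd ℂ z) • R (K x) - M (R (K x)) = K x := by
        rw [ContinuousLinearMap.sub_apply, halg] at h1
        exact h1
      rw [h3, hinvol]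
    · ext x
      rw [ContinuousLinearMap.mul_apply]
      show B ((algebraMap ℂ (H →L[ℂ] H) z - N) x) = x
      rw [ContinuousLinearMap.sub_apply, halg, hNapp]
      show K (R (K (z • x - K (M (K x))))) = x
      rw [K_sub K hadd hsmul, hsmul, hinvol]
      have h4 : (starRingEnd ℂ z) • K x - M (K x)
          = (algebraMap ℂ (H →L[ℂ] H) (starRingEnd ℂ z) - M) (K x) := by
        rw [ContinuousLinearMap.sub_apply, halg]
      rw [h4]
      have h5 : R ((algebraMap ℂ (H →L[ℂ] H) (starRingEnd ℂ z) - M) (K x)) = K x := by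
        have := congrArg (fun (T : H →L[ℂ] H) => T (K x)) hv2
        simpa using this
      rw [h5, hinvol]
  have hspecN : ∀ z ∈ spectrum ℂ N, z.im = 0 ∧ z.re ∈ Set.Ioc (-π) π := by
    intro z hz
    have h := hspec _ (hconjspec z hz)
    simp only [Complex.conj_im, Complex.conj_re, neg_eq_zero] at h
    exact h
  have hTS : ∀ x, K ((Complex.I • M) x) = ((-Complex.I) • N) (K x) := by
    intro x
    rw [ContinuousLinearMap.smul_apply, hsmul, ContinuousLinearMap.smul_apply, hNapp, hinvol]
    simp [Complex.conj_I]
  have h1 : ∀ y, (star τ) y = NormedSpace.exp ((-Complex.I) • N) y := by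
    intro y
    have h := kexp K hadd hsmul hnorm (Complex.I • M) ((-Complex.I) • N) hTS (K y)
    rw [hexp, hinvol] at h
    rw [← h, hKτ, hinvol]
  have hstar : star τ = NormedSpace.exp ((-Complex.I) • N) := ContinuousLinearMap.ext h1
  have hexpN : NormedSpace.exp (Complex.I • N) = τ := by
    have h := congrArg star hstar
    rw [star_star, NormedSpace.star_exp, star_smul, hNsa.star_eq] at h
    have h2 : star (-Complex.I) = Complex.I := by simp
    rw [h2] at h
    exact h.symm
  have hMc := key_log τ M hM hspec hexp
  have hNc := key_log τ N hNsa hspecN hexpN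
  have hMN : M = N := hMc.trans hNc.symm
  have hKM : ∀ x, K (M x) = M (K x) := by
    intro x
    conv_rhs => rw [hMN]
    rw [hNapp, hinvol]
  refine ⟨hKM, ?_, ?_, ?_, ?_, ?_⟩
  · norm_num [NormedSpace.exp_zero]
  · intro k k'
    rw [← NormedSpace.exp_add_of_commute_of_mem_ball (𝕂 := ℂ) (((Commute.refl M).smul_left _).smul_right _)
        (by simp [NormedSpace.expSeries_radius_eq_top]) (by simp [NormedSpace.expSeries_radius_eq_top]),
      ← add_smul]
    congr 2
    push_cast
    ring
  · intro k
    rw [NormedSpace.star_exp, star_smul, hM.star_eq]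
    congr 1
    have : star (Complex.I * (k : ℂ)) = Complex.I * ((-k : ℝ) : ℂ) := by
      simp only [star_mul', Complex.star_def, Complex.conj_I, Complex.conj_ofReal]
      push_cast
      ring
    rw [this]
  · convert hexp using 2
    norm_num
  · intro k x
    refine kexp K hadd hsmul hnorm _ _ (fun y => ?_) x
    rw [ContinuousLinearMap.smul_apply, hsmul, hKM, ContinuousLinearMap.smul_apply]
    have : starRingEnd ℂ (Complex.I * (k : ℂ)) = Complex.I * ((-k : ℝ) : ℂ) := by
      simp only [map_mul, Complex.conj_I, Complex.conj_ofReal]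
      push_cast
      ring
    rw [this]
end

section
/- Let β : ℝ → Matrix (Fin N) (Fin N) ℂ be continuous, ℤ-periodic, unitary-valued, with CS′ symmetry. Suppose there exist continuous, ℤ-periodic, self-adjoint matrix families h and h̃, both with CS symmetry, such that exp(−i h̃(k)/2)·exp(−i h(k)/2)·β(k)·exp(−i h(k)/2)·exp(−i h̃(k)/2) = Id for all k. Then u(x,k) := exp(−ix h(k))·exp(−ix h̃(k)) is unitary, ℤ-periodic in k, satisfies u(−1/2,k)⁻¹ · β(k) · u(1/2,k) = Id, and has the CS symmetry: the entrywise complex conjugate of u(x,k) equals u(−x,−k). -/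
open Matrix

open NormedSpace in
lemma myexp_mul_exp_neg {N : ℕ} (A : Matrix (Fin N) (Fin N) ℂ) :
    exp A * exp (-A) = 1 := by
  rw [← Matrix.exp_add_of_commute A (-A) (Commute.neg_right (Commute.refl A)),
    add_neg_cancel, exp_zero]

open NormedSpace in
lemma myexp_herm_ct {N : ℕ} (c : ℂ) (A : Matrix (Fin N) (Fin N) ℂ)
    (hA : A.IsHermitian) :
    (exp (c • A))ᴴ = exp ((starRingEnd ℂ c) • A) := by
  rw [← Matrix.exp_conjTranspose, conjTranspose_smul, hA.eq]
  rfl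

lemma map_conj_eq {N : ℕ} (A : Matrix (Fin N) (Fin N) ℂ) :
    A.map (starRingEnd ℂ) = (Aᴴ)ᵀ := by
  ext i j; simp [conjTranspose_apply]

open NormedSpace in
lemma myexp_map_conj {N : ℕ} (A : Matrix (Fin N) (Fin N) ℂ) :
    (exp A).map (starRingEnd ℂ) = exp (A.map (starRingEnd ℂ)) := by
  rw [map_conj_eq, map_conj_eq, ← Matrix.exp_conjTranspose, ← Matrix.exp_transpose]

lemma smul_map_conj {N : ℕ} (c : ℂ) (A : Matrix (Fin N) (Fin N) ℂ) :
    (c • A).map (starRingEnd ℂ) = (starRingEnd ℂ c) • A.map (starRingEnd ℂ) := by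
  ext i j; simp [Matrix.map_apply]

lemma prod_cancel {N : ℕ} (a b c d : Matrix (Fin N) (Fin N) ℂ)
    (h1 : b * c = 1) (h2 : a * d = 1) : (a * b) * (c * d) = 1 := by
  rw [mul_assoc, ← mul_assoc b c d, h1, one_mul, h2]

theorem stmt_15 {N : ℕ} (β : ℝ → Matrix (Fin N) (Fin N) ℂ)
    (hβcont : Continuous β)
    (hβper : ∀ k, β (k + 1) = β k)
    (hβu : ∀ k, β k * (β k)ᴴ = 1)
    (hβcs' : ∀ k, (β k).map (starRingEnd ℂ) = (β (-k))⁻¹)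
    (h h' : ℝ → Matrix (Fin N) (Fin N) ℂ)
    (hhcont : Continuous h) (hh'cont : Continuous h')
    (hhper : ∀ k, h (k + 1) = h k) (hh'per : ∀ k, h' (k + 1) = h' k)
    (hhsa : ∀ k, (h k).IsHermitian) (hh'sa : ∀ k, (h' k).IsHermitian)
    (hhcs : ∀ k, (h k).map (starRingEnd ℂ) = h (-k))
    (hh'cs : ∀ k, (h' k).map (starRingEnd ℂ) = h' (-k))
    (hmain : ∀ k, NormedSpace.exp ((-(Complex.I / 2)) • h' k) *
        NormedSpace.exp ((-(Complex.I / 2)) • h k) * β k *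
        NormedSpace.exp ((-(Complex.I / 2)) • h k) *
        NormedSpace.exp ((-(Complex.I / 2)) • h' k) = 1)
    (u : ℝ → ℝ → Matrix (Fin N) (Fin N) ℂ)
    (hu : ∀ x k, u x k = NormedSpace.exp ((-(Complex.I * x)) • h k) *
        NormedSpace.exp ((-(Complex.I * x)) • h' k)) :
    (∀ x k, u x k * (u x k)ᴴ = 1) ∧
    (∀ x k, u x (k + 1) = u x k) ∧
    (∀ k, (u (-(1/2)) k)⁻¹ * β k * u (1/2) k = 1) ∧
    (∀ x k, (u x k).map (starRingEnd ℂ) = u (-x) (-k)) := by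
  have key : ∀ (x : ℝ) (A : Matrix (Fin N) (Fin N) ℂ), A.IsHermitian →
      (NormedSpace.exp ((-(Complex.I * x)) • A))ᴴ =
        NormedSpace.exp (-((-(Complex.I * x)) • A)) := by
    intro x A hA
    rw [myexp_herm_ct _ _ hA, ← neg_smul]
    congr 1
    simp only [map_neg, _root_.map_mul, Complex.conj_I, Complex.conj_ofReal]; ring
  refine ⟨?_, ?_, ?_, ?_⟩
  · intro x k
    rw [hu, conjTranspose_mul, key _ _ (hhsa k), key _ _ (hh'sa k)]
    exact prod_cancel _ _ _ _ (myexp_mul_exp_neg _) (myexp_mul_exp_neg _)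
  · intro x k
    rw [hu, hu, hhper, hh'per]
  · intro k
    have s1 : -(Complex.I * ((-(1/2) : ℝ) : ℂ)) = Complex.I / 2 := by push_cast; ring
    have s2 : -(Complex.I * (((1/2) : ℝ) : ℂ)) = -(Complex.I / 2) := by push_cast; ring
    rw [hu, hu, s1, s2, Matrix.mul_inv_rev]
    have i1 : (NormedSpace.exp ((Complex.I / 2) • h k))⁻¹ =
        NormedSpace.exp ((-(Complex.I / 2)) • h k) := by
      rw [← Matrix.exp_neg, neg_smul]
    have i2 : (NormedSpace.exp ((Complex.I / 2) • h' k))⁻¹ =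
        NormedSpace.exp ((-(Complex.I / 2)) • h' k) := by
      rw [← Matrix.exp_neg, neg_smul]
    rw [i1, i2]
    simpa only [mul_assoc] using hmain k
  · intro x k
    have s3 : (starRingEnd ℂ) (-(Complex.I * (x : ℂ))) = -(Complex.I * ((-x : ℝ) : ℂ)) := by
      push_cast
      simp only [map_neg, _root_.map_mul, Complex.conj_I, Complex.conj_ofReal]
      ring
    rw [hu x k, hu (-x) (-k), Matrix.map_mul, myexp_map_conj, myexp_map_conj,
      smul_map_conj, smul_map_conj, hhcs, hh'cs, s3]
end

section
/- Let μ : ℝ → Matrix (Fin N) (Fin N) ℂ be a family of matrices with transpose(μ(k)) = μ(−k) for all k, and suppose ‖μ(k)μ(k)* − Id‖ < 1 uniformly in k, so that β(k) := (μ(k)μ(k)*)^{-1/2}·μ(k) is defined via the norm-convergent power series (1+x)^{-1/2} = Σ aₙxⁿ applied to μ(k)μ(k)* − Id. Then β(k) is unitary for every k and transpose(β(k)) = β(−k). -/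
open Matrix

attribute [local instance] Matrix.linftyOpNormedRing

attribute [local instance] Matrix.linftyOpNormedSpace

open Polynomial in
private lemma choose_mul_succ (r : ℝ) (n : ℕ) :
    (n + 1 : ℝ) * Ring.choose r (n + 1) = Ring.choose r n * (r - n) := by
  have h := Ring.descPochhammer_eq_factorial_smul_choose (R := ℝ) r (n + 1)
  rw [descPochhammer_succ_right, Polynomial.smeval_mul,
    Ring.descPochhammer_eq_factorial_smul_choose] at h
  have hX : ((X : ℤ[X]) - (n : ℤ[X])).smeval r = r - n := by
    simp [Polynomial.smeval_sub, Polynomial.smeval_X, Polynomial.smeval_natCast]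
  rw [hX, nsmul_eq_mul, nsmul_eq_mul, Nat.factorial_succ, Nat.cast_mul] at h
  have hne : ((n.factorial : ℝ)) ≠ 0 := by positivity
  push_cast at h
  apply mul_left_cancel₀ hne
  linear_combination -h

private lemma choose_half_abs_le (n : ℕ) : |Ring.choose (-(1/2) : ℝ) n| ≤ 1 := by
  induction n with
  | zero => simp [Ring.choose_zero_right]
  | succ n ih =>
    have h := choose_mul_succ (-(1/2) : ℝ) n
    have hpos : (0:ℝ) < n + 1 := by positivity
    have hrec : Ring.choose (-(1/2) : ℝ) (n+1) =
        Ring.choose (-(1/2) : ℝ) n * ((-(1/2) - n) / (n+1)) := by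
      field_simp
      linarith [h]
    rw [hrec, abs_mul]
    have habs : |(-(1/2) - (n:ℝ)) / (n+1)| ≤ 1 := by
      rw [abs_div, abs_of_pos hpos, div_le_one hpos, abs_le]
      constructor <;> linarith [Nat.cast_nonneg (α := ℝ) n]
    calc |Ring.choose (-(1/2):ℝ) n| * |(-(1/2) - (n:ℝ)) / (n+1)| ≤ 1 * 1 :=
          mul_le_mul ih habs (abs_nonneg _) zero_le_one
      _ = 1 := by ring

private lemma choose_neg_one (n : ℕ) : Ring.choose (-1 : ℝ) n = (-1) ^ n := by
  induction n with
  | zero => simp [Ring.choose_zero_right]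
  | succ n ih =>
    have h := choose_mul_succ (-1 : ℝ) n
    have hpos : ((n:ℝ) + 1) ≠ 0 := by positivity
    rw [ih] at h
    have hrec : Ring.choose (-1 : ℝ) (n+1) = (-1)^n * (-1 - n) / (n+1) := by
      field_simp
      linarith [h]
    rw [hrec, pow_succ]
    field_simp
    ring

section Matrices

variable {N : ℕ}

private lemma norm_one_le_aux : ‖(1 : Matrix (Fin N) (Fin N) ℂ)‖ ≤ 1 := by
  rw [← diagonal_one, linfty_opNorm_diagonal]
  exact (pi_norm_le_iff_of_nonneg zero_le_one).2 fun i => by simp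

private lemma summable_norm_aux {r : ℝ} (hr : r < 1) (hr0 : 0 ≤ r)
    (X : Matrix (Fin N) (Fin N) ℂ) (hX : ‖X‖ ≤ r) :
    Summable fun n : ℕ => ‖(Ring.choose (-(1/2) : ℝ) n) • X ^ n‖ := by
  refine (summable_geometric_of_lt_one hr0 hr).of_nonneg_of_le
    (fun n => norm_nonneg _) (fun n => ?_)
  have hpow : ‖X ^ n‖ ≤ r ^ n := by
    calc ‖X ^ n‖ ≤ ‖X‖ ^ n := by
          cases n with
          | zero =>
            rw [pow_zero, pow_zero]
            exact norm_one_le_aux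
          | succ m => exact norm_pow_le' _ m.succ_pos
      _ ≤ r ^ n := pow_le_pow_left₀ (norm_nonneg _) hX n
  calc ‖(Ring.choose (-(1/2) : ℝ) n) • X ^ n‖ = |Ring.choose (-(1/2) : ℝ) n| * ‖X ^ n‖ := by
        rw [norm_smul, Real.norm_eq_abs]
    _ ≤ 1 * (r ^ n) := mul_le_mul (choose_half_abs_le n) hpow (norm_nonneg _) zero_le_one
    _ = r ^ n := one_mul _

private lemma sq_mul_aux {r : ℝ} (hr : r < 1) (hr0 : 0 ≤ r)
    (X : Matrix (Fin N) (Fin N) ℂ) (hX : ‖X‖ ≤ r) :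
    ((∑' n : ℕ, (Ring.choose (-(1/2) : ℝ) n) • X ^ n) *
      (∑' n : ℕ, (Ring.choose (-(1/2) : ℝ) n) • X ^ n)) * (1 + X) = 1 := by
  have hs := summable_norm_aux hr hr0 X hX
  have hcauchy : (∑' n : ℕ, (Ring.choose (-(1/2) : ℝ) n) • X ^ n) *
      (∑' n : ℕ, (Ring.choose (-(1/2) : ℝ) n) • X ^ n) = ∑' n : ℕ, (-X) ^ n := by
    refine (tsum_mul_tsum_eq_tsum_sum_antidiagonal_of_summable_norm hs hs).trans ?_
    refine tsum_congr fun n => ?_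
    have hterm : ∀ p ∈ Finset.HasAntidiagonal.antidiagonal n,
        ((Ring.choose (-(1/2) : ℝ) p.1) • X ^ p.1) * ((Ring.choose (-(1/2) : ℝ) p.2) • X ^ p.2)
          = (Ring.choose (-(1/2) : ℝ) p.1 * Ring.choose (-(1/2) : ℝ) p.2) • X ^ n := by
      intro p hp
      have hpn : p.1 + p.2 = n := Finset.HasAntidiagonal.mem_antidiagonal.mp hp
      rw [smul_mul_assoc, mul_smul_comm, smul_smul, ← pow_add, hpn]
    rw [Finset.sum_congr rfl hterm, ← Finset.sum_smul]
    have hsumchoose : (∑ p ∈ Finset.HasAntidiagonal.antidiagonal n,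
        Ring.choose (-(1/2) : ℝ) p.1 * Ring.choose (-(1/2) : ℝ) p.2) = (-1 : ℝ) ^ n := by
      rw [← Ring.add_choose_eq n (Commute.all _ _)]
      norm_num [choose_neg_one n]
    rw [hsumchoose, ← smul_pow, neg_smul, one_smul]
  rw [hcauchy]
  have hgeom := geom_series_mul_neg (-X) (by rw [norm_neg]; exact lt_of_le_of_lt hX hr)
  rw [sub_neg_eq_add] at hgeom
  exact hgeom

end Matrices

theorem stmt_16 {N : ℕ} (μ : ℝ → Matrix (Fin N) (Fin N) ℂ) (r : ℝ) (hr : r < 1)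
    (hsym : ∀ k, (μ k)ᵀ = μ (-k))
    (hnorm : ∀ k, ‖μ k * (μ k)ᴴ - 1‖ ≤ r)
    (β : ℝ → Matrix (Fin N) (Fin N) ℂ)
    (hβ : ∀ k, β k =
      (∑' n : ℕ, (Ring.choose (-(1/2) : ℝ) n) • (μ k * (μ k)ᴴ - 1) ^ n) * μ k) :
    ∀ k : ℝ, β k * (β k)ᴴ = 1 ∧ (β k)ᵀ = β (-k) := by
  have hr0 : 0 ≤ r := le_trans (norm_nonneg _) (hnorm 0)
  -- notation
  set a : ℕ → ℝ := fun n => Ring.choose (-(1/2) : ℝ) n with ha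
  have hsummn : ∀ q : ℝ, Summable fun n : ℕ => ‖a n • (μ q * (μ q)ᴴ - 1) ^ n‖ :=
    fun q => summable_norm_aux hr hr0 _ (hnorm q)
  have hsum : ∀ q : ℝ, Summable fun n : ℕ => a n • (μ q * (μ q)ᴴ - 1) ^ n :=
    fun q => (hsummn q).of_norm
  -- conj-transpose and transpose as ℝ-linear maps
  let CT : Matrix (Fin N) (Fin N) ℂ →ₗ[ℝ] Matrix (Fin N) (Fin N) ℂ :=
    { toFun := fun A => Aᴴ
      map_add' := fun A B => conjTranspose_add A B
      map_smul' := fun c A => by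
        ext i j
        simp only [conjTranspose_apply, Matrix.smul_apply, RingHom.id_apply]
        rw [star_smul, star_trivial] }
  let TR : Matrix (Fin N) (Fin N) ℂ →ₗ[ℝ] Matrix (Fin N) (Fin N) ℂ :=
    { toFun := fun A => Aᵀ
      map_add' := fun A B => transpose_add A B
      map_smul' := fun c A => transpose_smul c A }
  have map_tsum : ∀ (T : Matrix (Fin N) (Fin N) ℂ →ₗ[ℝ] Matrix (Fin N) (Fin N) ℂ) (q : ℝ),
      T (∑' n : ℕ, a n • (μ q * (μ q)ᴴ - 1) ^ n) = ∑' n : ℕ, T (a n • (μ q * (μ q)ᴴ - 1) ^ n) :=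
    fun T q =>
      ((hsum q).hasSum.map T.toAddMonoidHom T.continuous_of_finiteDimensional).tsum_eq.symm
  intro k
  set X : Matrix (Fin N) (Fin N) ℂ := μ k * (μ k)ᴴ - 1 with hX
  set S : Matrix (Fin N) (Fin N) ℂ := ∑' n : ℕ, a n • X ^ n with hS
  constructor
  · -- unitarity
    have hXherm : Xᴴ = X := by
      rw [hX]
      simp [conjTranspose_sub, conjTranspose_mul]
    have hSherm : Sᴴ = S := by
      refine (map_tsum CT k).trans (tsum_congr fun n => ?_)
      show (a n • X ^ n)ᴴ = a n • X ^ n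
      have h1 : (a n • X ^ n)ᴴ = a n • (X ^ n)ᴴ := CT.map_smul (a n) (X ^ n)
      rw [h1, conjTranspose_pow, hXherm]
    have hcomm : S * (μ k * (μ k)ᴴ) = (μ k * (μ k)ᴴ) * S := by
      rw [hS, ← (hsum k).tsum_mul_right, ← (hsum k).tsum_mul_left]
      refine tsum_congr fun n => ?_
      rw [smul_mul_assoc, mul_smul_comm]
      congr 1
      have hc : Commute X (μ k * (μ k)ᴴ) := by
        rw [hX]
        exact (Commute.refl _).sub_left (Commute.one_left _)
      exact (hc.pow_left n).eq
    have hkey := sq_mul_aux hr hr0 X (hnorm k)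
    have hA : (1 : Matrix (Fin N) (Fin N) ℂ) + X = μ k * (μ k)ᴴ := by
      rw [hX]
      abel
    calc β k * (β k)ᴴ = (S * μ k) * ((μ k)ᴴ * Sᴴ) := by
          rw [hβ k, conjTranspose_mul]
      _ = S * ((μ k * (μ k)ᴴ) * S) := by
          rw [hSherm]
          simp only [mul_assoc]
      _ = S * (S * (μ k * (μ k)ᴴ)) := by rw [← hcomm]
      _ = (S * S) * (1 + X) := by rw [hA, mul_assoc]
      _ = 1 := hkey
  · -- transpose
    have hy : Xᵀ = (μ (-k))ᴴ * μ (-k) - 1 := by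
      rw [hX, transpose_sub, transpose_mul, transpose_one, ← hsym k]
      congr 1
    have hsemi : ∀ n : ℕ, μ (-k) * (Xᵀ) ^ n = ((μ (-k) * (μ (-k))ᴴ - 1) ^ n) * μ (-k) := by
      have hbase : SemiconjBy (μ (-k)) (Xᵀ) (μ (-k) * (μ (-k))ᴴ - 1) := by
        show μ (-k) * Xᵀ = (μ (-k) * (μ (-k))ᴴ - 1) * μ (-k)
        rw [hy, mul_sub, sub_mul, mul_one, one_mul, ← mul_assoc]
      exact fun n => (hbase.pow_right n).eq
    have hsumT : Summable fun n : ℕ => (a n • X ^ n)ᵀ :=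
      ⟨_, (hsum k).hasSum.map TR.toAddMonoidHom TR.continuous_of_finiteDimensional⟩
    symm
    calc β (-k) = (∑' n : ℕ, a n • (μ (-k) * (μ (-k))ᴴ - 1) ^ n) * μ (-k) := hβ (-k)
      _ = ∑' n : ℕ, (a n • (μ (-k) * (μ (-k))ᴴ - 1) ^ n) * μ (-k) :=
          ((hsum (-k)).tsum_mul_right _).symm
      _ = ∑' n : ℕ, μ (-k) * (a n • X ^ n)ᵀ := by
          refine tsum_congr fun n => ?_
          rw [transpose_smul, transpose_pow, mul_smul_comm, smul_mul_assoc, hsemi n]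
      _ = μ (-k) * ∑' n : ℕ, (a n • X ^ n)ᵀ := hsumT.tsum_mul_left _
      _ = μ (-k) * Sᵀ := by
          congr 1
          exact (map_tsum TR k).symm
      _ = (μ k)ᵀ * Sᵀ := by rw [hsym k]
      _ = (S * μ k)ᵀ := (transpose_mul _ _).symm
      _ = (β k)ᵀ := by rw [hβ k, hS]
end

section
/- Let w : ℝ² → ℂ satisfy |w(x)| ≤ C·exp(−α‖x − γ‖) and |w′(x)| ≤ C·exp(−α‖x − γ′‖) for points γ, γ′ ∈ ℝ² and constants C < ∞, α > 0. Then for the flux function fl(γ, x, γ′) of a magnetic field with ‖B‖_∞ ≤ 1 (satisfying |fl(γ,x,γ′)| ≤ (1/2)‖γ − x‖·‖x − γ′‖), the matrix element D := ∫_{ℝ²} w′(x)·conj(w(x))·(exp(i·b·fl(γ′,x,γ)) − 1) dx satisfies |D| ≤ |b|·C′·exp(−α′‖γ − γ′‖) for some constants C′ < ∞ and 0 < α′ < α depending only on C and α. -/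
open Real MeasureTheory

-- lemma C : norm of exp(I*b*θ)-1
lemma aux_exp_circle (r : ℝ) : ‖Complex.exp (r * Complex.I) - 1‖ ≤ |r| := by
  have h : Complex.exp (r * Complex.I) - 1 = Complex.mk (Real.cos r - 1) (Real.sin r) := by
    rw [Complex.exp_mul_I]
    apply Complex.ext <;> simp [Complex.cos_ofReal_re, Complex.sin_ofReal_re]
  rw [h]
  have h2 : ‖Complex.mk (Real.cos r - 1) (Real.sin r)‖ ^ 2 = (Real.cos r - 1)^2 + (Real.sin r)^2 := by
    rw [Complex.sq_norm, Complex.normSq_mk]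
    ring
  refine le_of_pow_le_pow_left₀ two_ne_zero (abs_nonneg r) ?_
  rw [h2]
  have hcos := Real.one_sub_sq_div_two_le_cos (x := r)
  have hsin := Real.sin_sq_add_cos_sq r
  have : (Real.cos r - 1)^2 + (Real.sin r)^2 = 2 - 2 * Real.cos r := by nlinarith
  rw [this, sq_abs]
  nlinarith

lemma aux_t_exp (c t : ℝ) (hc : 0 < c) (ht : 0 ≤ t) : t * Real.exp (-(c * t)) ≤ 1 / c := by
  have h := Real.add_one_le_exp (c * t)
  have hp := Real.exp_pos (c * t)
  rw [Real.exp_neg]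
  rw [mul_inv_le_iff₀ hp]
  rw [div_mul_eq_mul_div, le_div_iff₀ hc]
  nlinarith

lemma aux_key (α : ℝ) (hα : 0 < α) (s t d : ℝ) (hs : 0 ≤ s) (ht : 0 ≤ t) (hd : d ≤ s + t) :
    Real.exp (-(α * t)) * Real.exp (-(α * s)) * (t * s) ≤
      16 / α ^ 2 * Real.exp (-(α / 2 * d)) * Real.exp (-(α / 4 * s)) := by
  have e1 : Real.exp (-(α * t)) * Real.exp (-(α * s)) * (t * s)
      = (Real.exp (-(α/2*t)) * Real.exp (-(α/2*s)))
        * ((t * Real.exp (-(α/4*t))) * (s * Real.exp (-(α/4*s))))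
        * Real.exp (-(α/4*t)) * Real.exp (-(α/4*s)) := by
    rw [show -(α*t) = -(α/2*t) + -(α/4*t) + -(α/4*t) by ring,
      show -(α*s) = -(α/2*s) + -(α/4*s) + -(α/4*s) by ring,
      Real.exp_add, Real.exp_add, Real.exp_add, Real.exp_add]
    ring
  rw [e1]
  have hb1 := aux_t_exp (α/4) t (by positivity) ht
  have hb2 := aux_t_exp (α/4) s (by positivity) hs
  have hb3 : Real.exp (-(α/2*t)) * Real.exp (-(α/2*s)) ≤ Real.exp (-(α/2*d)) := by
    rw [← Real.exp_add, Real.exp_le_exp]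
    nlinarith
  have hb4 : Real.exp (-(α/4*t)) ≤ 1 := Real.exp_le_one_iff.mpr (by nlinarith)
  calc (Real.exp (-(α/2*t)) * Real.exp (-(α/2*s)))
        * ((t * Real.exp (-(α/4*t))) * (s * Real.exp (-(α/4*s))))
        * Real.exp (-(α/4*t)) * Real.exp (-(α/4*s))
      ≤ Real.exp (-(α/2*d)) * ((1/(α/4)) * (1/(α/4))) * 1 * Real.exp (-(α/4*s)) := by
        gcongr <;> positivity
    _ = 16 / α ^ 2 * Real.exp (-(α / 2 * d)) * Real.exp (-(α / 4 * s)) := by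
        field_simp; ring

lemma aux_exp_le (c t : ℝ) (hc : 0 < c) (ht : 0 ≤ t) :
    Real.exp (-(c * t)) ≤ (1 + 3/c)^3 * (1 + t) ^ (-(3:ℝ)) := by
  have h1 : 1 + t ≤ (1 + 3/c) * Real.exp (c/3 * t) := by
    have h := Real.add_one_le_exp (c/3 * t)
    have hq : (1 + 3/c) * (c/3*t + 1) = 1 + t + c/3*t + 3/c := by field_simp; ring
    nlinarith [mul_le_mul_of_nonneg_left h (by positivity : (0:ℝ) ≤ 1 + 3/c),
      (by positivity : (0:ℝ) ≤ c/3*t), (by positivity : (0:ℝ) ≤ 3/c)]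
  have h2 : (1 + t)^3 ≤ (1 + 3/c)^3 * Real.exp (c*t) := by
    calc (1 + t)^3 ≤ ((1 + 3/c) * Real.exp (c/3*t))^3 :=
          pow_le_pow_left₀ (by positivity) h1 3
      _ = (1 + 3/c)^3 * Real.exp (c*t) := by
          rw [mul_pow, ← Real.exp_nat_mul]
          congr 2
          field_simp
          norm_num
  have h4 : Real.exp (-(c*t)) * (1+t)^3 ≤ (1 + 3/c)^3 := by
    have e : Real.exp (-(c*t)) * Real.exp (c*t) = 1 := by
      rw [← Real.exp_add]; simp
    calc Real.exp (-(c*t)) * (1+t)^3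
        ≤ Real.exp (-(c*t)) * ((1 + 3/c)^3 * Real.exp (c*t)) :=
          mul_le_mul_of_nonneg_left h2 (Real.exp_pos _).le
      _ = (1 + 3/c)^3 * (Real.exp (-(c*t)) * Real.exp (c*t)) := by ring
      _ = (1 + 3/c)^3 := by rw [e, mul_one]
  have h5 : (1 + t) ^ (-(3:ℝ)) = ((1+t)^3)⁻¹ := by
    rw [Real.rpow_neg (by positivity), show ((3:ℝ)) = ((3:ℕ):ℝ) by norm_num,
      Real.rpow_natCast]
  rw [h5, ← div_eq_mul_inv, le_div_iff₀ (by positivity)]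
  exact h4

lemma aux_integrable (c : ℝ) (hc : 0 < c) :
    Integrable (fun x : EuclideanSpace ℝ (Fin 2) => Real.exp (-(c * ‖x‖))) := by
  have h3 : ((Module.finrank ℝ (EuclideanSpace ℝ (Fin 2)) : ℝ)) < 3 := by
    simp [finrank_euclideanSpace]; norm_num
  refine ((integrable_one_add_norm h3).const_mul ((1 + 3/c)^3)).mono' ?_ ?_
  · exact (Real.continuous_exp.comp (continuous_const.mul continuous_norm).neg).aestronglyMeasurable
  · filter_upwards with x
    rw [Real.norm_eq_abs, Real.abs_exp]
    exact aux_exp_le c ‖x‖ hc (norm_nonneg x)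

theorem stmt_18 (C α : ℝ) (hC : 0 < C) (hα : 0 < α) :
    ∃ (C' α' : ℝ), 0 < C' ∧ 0 < α' ∧ α' < α ∧
      ∀ (w w' : EuclideanSpace ℝ (Fin 2) → ℂ)
        (γ γ' : EuclideanSpace ℝ (Fin 2))
        (fl : EuclideanSpace ℝ (Fin 2) → EuclideanSpace ℝ (Fin 2) →
          EuclideanSpace ℝ (Fin 2) → ℝ) (b : ℝ),
        Measurable w → Measurable w' →
        (∀ x, ‖w x‖ ≤ C * Real.exp (-(α * ‖x - γ‖))) →
        (∀ x, ‖w' x‖ ≤ C * Real.exp (-(α * ‖x - γ'‖))) →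
        (∀ a x c, |fl a x c| ≤ (1/2) * ‖a - x‖ * ‖x - c‖) →
        Measurable (fun x => fl γ' x γ) →
        ‖∫ x : EuclideanSpace ℝ (Fin 2),
            w' x * (starRingEnd ℂ) (w x) *
              (Complex.exp (Complex.I * b * (fl γ' x γ)) - 1)‖ ≤
          |b| * C' * Real.exp (-(α' * ‖γ - γ'‖)) := by
  set J : ℝ := ∫ x : EuclideanSpace ℝ (Fin 2), Real.exp (-(α/4 * ‖x‖)) with hJdef
  have hJ : 0 ≤ J := integral_nonneg fun x => (Real.exp_pos _).le
  refine ⟨8/α^2 * C^2 * J + 1, α/2, by positivity, by positivity, by linarith, ?_⟩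
  intro w w' γ γ' fl b hw hw' hwb hw'b hfl hflm
  set d : ℝ := ‖γ - γ'‖ with hd
  set M : ℝ := C^2 * |b| * (8/α^2) * Real.exp (-(α/2 * d)) with hM
  have hMnn : 0 ≤ M := by positivity
  have hgi : Integrable (fun x : EuclideanSpace ℝ (Fin 2) =>
      M * Real.exp (-(α/4 * ‖x - γ‖))) := by
    exact ((aux_integrable (α/4) (by positivity)).comp_sub_right γ).const_mul M
  have hbound : ∀ x : EuclideanSpace ℝ (Fin 2),
      ‖w' x * (starRingEnd ℂ) (w x) *
        (Complex.exp (Complex.I * b * (fl γ' x γ)) - 1)‖ ≤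
        M * Real.exp (-(α/4 * ‖x - γ‖)) := by
    intro x
    set s : ℝ := ‖x - γ‖ with hsdef
    set t : ℝ := ‖x - γ'‖ with htdef
    have hs : 0 ≤ s := norm_nonneg _
    have ht : 0 ≤ t := norm_nonneg _
    have hdle : d ≤ s + t := by
      calc d = dist γ γ' := by rw [hd, dist_eq_norm]
        _ ≤ dist γ x + dist x γ' := dist_triangle γ x γ'
        _ = s + t := by rw [dist_eq_norm, dist_eq_norm, norm_sub_rev γ x]
    have h3 : ‖Complex.exp (Complex.I * b * (fl γ' x γ)) - 1‖ ≤ |b| * ((1/2) * t * s) := by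
      have e : Complex.I * b * (fl γ' x γ) = ((b * fl γ' x γ : ℝ) : ℂ) * Complex.I := by
        push_cast; ring
      rw [e]
      refine (aux_exp_circle _).trans ?_
      rw [abs_mul]
      have := hfl γ' x γ
      have h4 : |fl γ' x γ| ≤ (1/2) * t * s := by
        calc |fl γ' x γ| ≤ (1/2) * ‖γ' - x‖ * ‖x - γ‖ := hfl γ' x γ
          _ = (1/2) * t * s := by rw [norm_sub_rev γ' x]
      exact mul_le_mul_of_nonneg_left h4 (abs_nonneg b)
    calc ‖w' x * (starRingEnd ℂ) (w x) *
          (Complex.exp (Complex.I * b * (fl γ' x γ)) - 1)‖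
        = ‖w' x‖ * ‖w x‖ * ‖Complex.exp (Complex.I * b * (fl γ' x γ)) - 1‖ := by
          simp [norm_mul]
      _ ≤ (C * Real.exp (-(α * t))) * (C * Real.exp (-(α * s)))
            * (|b| * ((1/2) * t * s)) := by
          exact mul_le_mul (mul_le_mul (hw'b x) (hwb x) (norm_nonneg _) (by positivity))
            h3 (norm_nonneg _) (by positivity)
      _ = (C^2 * |b| * (1/2)) * (Real.exp (-(α * t)) * Real.exp (-(α * s)) * (t * s)) := by
          ring
      _ ≤ (C^2 * |b| * (1/2)) *
            (16 / α ^ 2 * Real.exp (-(α/2 * d)) * Real.exp (-(α/4 * s))) := by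
          exact mul_le_mul_of_nonneg_left (aux_key α hα s t d hs ht hdle) (by positivity)
      _ = M * Real.exp (-(α/4 * s)) := by rw [hM]; ring
  have hmain := norm_integral_le_of_norm_le hgi (Filter.Eventually.of_forall hbound)
  refine hmain.trans ?_
  have hint : (∫ x : EuclideanSpace ℝ (Fin 2), M * Real.exp (-(α/4 * ‖x - γ‖))) = M * J := by
    rw [integral_const_mul]
    congr 1
    exact integral_sub_right_eq_self (fun y : EuclideanSpace ℝ (Fin 2) =>
      Real.exp (-(α/4 * ‖y‖))) γ
  rw [hint, hM]
  have hA : (0:ℝ) ≤ |b| * Real.exp (-(α/2 * d)) := by positivity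
  calc C^2 * |b| * (8/α^2) * Real.exp (-(α/2 * d)) * J
      = (8/α^2 * C^2 * J) * (|b| * Real.exp (-(α/2 * d))) := by ring
    _ ≤ (8/α^2 * C^2 * J + 1) * (|b| * Real.exp (-(α/2 * d))) := by
        exact mul_le_mul_of_nonneg_right (by linarith) hA
    _ = |b| * (8/α^2 * C^2 * J + 1) * Real.exp (-(α/2 * ‖γ - γ'‖)) := by rw [hd]; ring
end
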